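/- Let L be a finite distributive strong upper semilattice, let x ∈ M be meet-irreducible, and let x⁺ be a greatest lower bound of the set {y ∈ M | x < y} (i.e. IsGLB {y | y is meet-irreducible and x < y} x⁺). Then x < x⁺. -/
import Mathlib


/-- A strong upper semilattice: any two elements with a common lower bound
have a greatest lower bound. -/
def StrongUpper (L : Type*) [SemilatticeSup L] : Prop :=
  ∀ x y : L, (∃ z, z ≤ x ∧ z ≤ y) → ∃ w, IsGLB {x, y} w

/-- Every interval is a distributive lattice. -/
def IntervalDistrib (L : Type*) [SemilatticeSup L] : Prop :=
  ∀ a x y z w w' : L, a ≤ x → a ≤ y → a ≤ z →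
    IsGLB {x, y} w → IsGLB {x ⊔ z, y ⊔ z} w' → w' = w ⊔ z

/-- Meet-irreducible element. -/
def MeetIrred {L : Type*} [SemilatticeSup L] [OrderTop L] (m : L) : Prop :=
  m ≠ ⊤ ∧ ∀ p q : L, IsGLB {p, q} m → m = p ∨ m = q

private lemma glb_finset {L : Type*} [SemilatticeSup L] (hS : StrongUpper L)
    (m : L) : ∀ (F : Finset L), F.Nonempty → (∀ y ∈ F, m ≤ y) →
    ∃ w, IsGLB (F : Set L) w ∧ m ≤ w := by
  intro F
  classical
  induction F using Finset.induction with
  | empty => intro h; exact absurd h (by simp)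
  | @insert a T ha ih =>
    intro _ hlb
    rcases T.eq_empty_or_nonempty with rfl | hT
    · exact ⟨a, by simp [isGLB_singleton], hlb a (by simp)⟩
    · obtain ⟨w, hw, hmw⟩ := ih hT (fun y hy => hlb y (Finset.mem_insert_of_mem hy))
      have hma : m ≤ a := hlb a (Finset.mem_insert_self a T)
      obtain ⟨w', hw'⟩ := hS a w ⟨m, hma, hmw⟩
      have hw'a : w' ≤ a := hw'.1 (by simp)
      have hw'w : w' ≤ w := hw'.1 (by simp)
      have hmlb : m ∈ lowerBounds ({a, w} : Set L) := by
        intro t ht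
        rcases ht with rfl | ht
        · exact hma
        · simp only [Set.mem_singleton_iff] at ht; subst ht; exact hmw
      refine ⟨w', ⟨?_, ?_⟩, hw'.2 hmlb⟩
      · intro y hy
        simp only [Finset.coe_insert, Set.mem_insert_iff] at hy
        rcases hy with rfl | hy
        · exact hw'a
        · exact le_trans hw'w (hw.1 hy)
      · intro z hz
        refine hw'.2 ?_
        intro t ht
        rcases ht with rfl | ht
        · exact hz (by simp)
        · simp only [Set.mem_singleton_iff] at ht
          subst ht
          exact hw.2 (fun y hy => hz (by simpa using Or.inr hy))

private lemma no_glb_strict {L : Type*} [SemilatticeSup L] [OrderTop L]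
    (hS : StrongUpper L) (m : L) (hm : MeetIrred m) :
    ∀ F : Finset L, (∀ y ∈ F, m < y) → IsGLB (F : Set L) m → False := by
  intro F
  classical
  induction F using Finset.induction with
  | empty =>
    intro _ h
    have : (⊤ : L) ≤ m := h.2 (by simp)
    exact hm.1 (top_le_iff.mp this)
  | @insert a T ha ih =>
    intro hstrict h
    rcases T.eq_empty_or_nonempty with rfl | hT
    · have hma : m ≤ a := h.1 (by simp)
      have ham : a ≤ m := h.2 (fun t ht => by
        have : t = a := by simpa using ht
        exact this ▸ le_rfl)
      exact absurd (le_antisymm hma ham) (hstrict a (by simp)).ne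
    · have hlb : ∀ y ∈ T, m ≤ y := fun y hy =>
        (hstrict y (Finset.mem_insert_of_mem hy)).le
      obtain ⟨w, hw, hmw⟩ := glb_finset hS m T hT hlb
      have hma : m ≤ a := (hstrict a (Finset.mem_insert_self a T)).le
      have hglb : IsGLB ({a, w} : Set L) m := by
        constructor
        · intro t ht
          rcases ht with rfl | ht
          · exact hma
          · simp only [Set.mem_singleton_iff] at ht; subst ht; exact hmw
        · intro z hz
          refine h.2 ?_
          intro t ht
          simp only [Finset.coe_insert, Set.mem_insert_iff] at ht
          rcases ht with rfl | ht
          · exact hz (by simp)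
          · exact le_trans (hz (by simp)) (hw.1 ht)
      rcases hm.2 a w hglb with rfl | rfl
      · exact absurd rfl (hstrict m (Finset.mem_insert_self m T)).ne'
      · exact ih (fun y hy => hstrict y (Finset.mem_insert_of_mem hy)) hw

theorem lt_meetIrred_succ {L : Type*} [SemilatticeSup L] [OrderTop L] [Finite L]
    (hS : StrongUpper L) (hD : IntervalDistrib L)
    (x xp : L) (hx : MeetIrred x)
    (hxp : IsGLB {y : L | MeetIrred y ∧ x < y} xp) :
    x < xp := by
  have hxle : x ≤ xp := hxp.2 (fun y hy => hy.2.le)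
  refine lt_of_le_of_ne hxle (fun heq => ?_)
  subst heq
  set S : Set L := {y : L | MeetIrred y ∧ x < y} with hSdef
  have hfin : S.Finite := Set.toFinite S
  have hcoe : (hfin.toFinset : Set L) = S := hfin.coe_toFinset
  refine no_glb_strict hS x hx hfin.toFinset ?_ (by rw [hcoe]; exact hxp)
  intro y hy
  have : y ∈ S := by rwa [Set.Finite.mem_toFinset] at hy
  exact this.2
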